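/- For m, n ∈ ℕ, let G_{m,n} = ⟨s, t | s², t^m, (st⁻¹st)^n⟩ and H_{m,n} = ⟨s_1, …, s_m, T | s_i², T^m, (s_i s_{i+1})^n, T⁻¹s_iT s_{i+1} (indices mod m)⟩. Then the map s ↦ s_m, t ↦ T extends to a group isomorphism G_{m,n} ≅ H_{m,n}. -/

import Mathlib

/-- The relations of the group `G_{m,n} = ⟨s, t | s², tᵐ, (st⁻¹st)ⁿ⟩`. -/
def relsGmn (m n : ℕ) : Set (FreeGroup (Fin 2)) :=
  letI s : FreeGroup (Fin 2) := FreeGroup.of 0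
  letI t : FreeGroup (Fin 2) := FreeGroup.of 1
  {s ^ 2, t ^ m, (s * t⁻¹ * s * t) ^ n}

/-- The cyclic successor `i ↦ i + 1 (mod m)` on `Fin m`. -/
def cycSucc {m : ℕ} (hm : 0 < m) (i : Fin m) : Fin m :=
  ⟨(i.val + 1) % m, Nat.mod_lt _ hm⟩

/-- The relations of `H_{m,n} = ⟨s_1, …, s_m, T | s_i², Tᵐ, (s_i s_{i+1})ⁿ, T⁻¹s_iTs_{i+1}⟩`,
with indices taken mod `m`. The generator `Sum.inl i` is `s_i` and `Sum.inr ()` is `T`. -/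
def relsHmn (m n : ℕ) (hm : 0 < m) : Set (FreeGroup (Fin m ⊕ Unit)) :=
  letI s : Fin m → FreeGroup (Fin m ⊕ Unit) := fun i => FreeGroup.of (Sum.inl i)
  letI T : FreeGroup (Fin m ⊕ Unit) := FreeGroup.of (Sum.inr ())
  {r | (∃ i, r = s i ^ 2) ∨ r = T ^ m ∨ (∃ i, r = (s i * s (cycSucc hm i)) ^ n) ∨
    (∃ i, r = T⁻¹ * s i * T * s (cycSucc hm i))}

lemma rel_one {α : Type*} {rels : Set (FreeGroup α)} {r : FreeGroup α} (h : r ∈ rels) :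
    PresentedGroup.mk rels r = 1 :=
  (QuotientGroup.eq_one_iff _).mpr (Subgroup.subset_normalClosure h)

section Aux

variable (m n : ℕ) (hm : 0 < m)

/-- `σ` in `G`. -/
noncomputable def σG : PresentedGroup (relsGmn m n) := PresentedGroup.of 0
/-- `τ` in `G`. -/
noncomputable def τG : PresentedGroup (relsGmn m n) := PresentedGroup.of 1
/-- `s i` in `H`. -/
noncomputable def sH (i : Fin m) : PresentedGroup (relsHmn m n hm) :=
  PresentedGroup.of (Sum.inl i)
/-- `T` in `H`. -/
noncomputable def TH : PresentedGroup (relsHmn m n hm) := PresentedGroup.of (Sum.inr ())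

lemma σG_sq : σG m n ^ 2 = 1 := by
  have := rel_one (rels := relsGmn m n) (Or.inl rfl)
  simpa [σG, PresentedGroup.of] using this

lemma τG_pow : τG m n ^ m = 1 := by
  have := rel_one (rels := relsGmn m n) (Or.inr (Or.inl rfl))
  simpa [τG, PresentedGroup.of] using this

lemma G_rel3 : (σG m n * (τG m n)⁻¹ * σG m n * τG m n) ^ n = 1 := by
  have := rel_one (rels := relsGmn m n) (Or.inr (Or.inr rfl))
  simpa [σG, τG, PresentedGroup.of] using this

lemma sH_sq (i : Fin m) : sH m n hm i ^ 2 = 1 := by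
  have := rel_one (rels := relsHmn m n hm) (Or.inl ⟨i, rfl⟩)
  simpa [sH, PresentedGroup.of] using this

lemma TH_pow : TH m n hm ^ m = 1 := by
  have := rel_one (rels := relsHmn m n hm) (Or.inr (Or.inl rfl))
  simpa [TH, PresentedGroup.of] using this

lemma H_rel3 (i : Fin m) : (sH m n hm i * sH m n hm (cycSucc hm i)) ^ n = 1 := by
  have := rel_one (rels := relsHmn m n hm) (Or.inr (Or.inr (Or.inl ⟨i, rfl⟩)))
  simpa [sH, PresentedGroup.of] using this

lemma H_rel4 (i : Fin m) :
    (TH m n hm)⁻¹ * sH m n hm i * TH m n hm * sH m n hm (cycSucc hm i) = 1 := by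
  have := rel_one (rels := relsHmn m n hm) (Or.inr (Or.inr (Or.inr ⟨i, rfl⟩)))
  simpa [sH, TH, PresentedGroup.of] using this

lemma sH_inv (i : Fin m) : (sH m n hm i)⁻¹ = sH m n hm i := by
  have h := sH_sq m n hm i
  rw [pow_two] at h
  exact inv_eq_of_mul_eq_one_right h

lemma H_conj (i : Fin m) :
    (TH m n hm)⁻¹ * sH m n hm i * TH m n hm = sH m n hm (cycSucc hm i) := by
  have h := H_rel4 m n hm i
  have := mul_eq_one_iff_eq_inv.mp h
  rw [this, sH_inv]

lemma H_conj_pow (k : ℕ) (i : Fin m) :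
    (TH m n hm ^ k)⁻¹ * sH m n hm i * TH m n hm ^ k =
      sH m n hm ⟨(i.val + k) % m, Nat.mod_lt _ hm⟩ := by
  induction k with
  | zero => simp [Nat.mod_eq_of_lt i.isLt]
  | succ k ih =>
    have : (TH m n hm ^ (k + 1))⁻¹ * sH m n hm i * TH m n hm ^ (k + 1) =
        (TH m n hm)⁻¹ * ((TH m n hm ^ k)⁻¹ * sH m n hm i * TH m n hm ^ k) * TH m n hm := by
      rw [pow_succ]; group
    rw [this, ih, H_conj]
    congr 1
    apply Fin.ext
    show ((i.val + k) % m + 1) % m = (i.val + (k + 1)) % m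
    rw [Nat.mod_add_mod, Nat.add_assoc]

/-- The map `Fin 2 → H` defining `φ`. -/
noncomputable def fG : Fin 2 → PresentedGroup (relsHmn m n hm) :=
  ![sH m n hm ⟨m - 1, Nat.sub_lt hm one_pos⟩, TH m n hm]

lemma fG_rels : ∀ r ∈ relsGmn m n, FreeGroup.lift (fG m n hm) r = 1 := by
  intro r hr
  rcases hr with h | h | h
  · subst h; simp [fG, sH_sq]
  · subst h; simp [fG, TH_pow]
  · subst h
    simp only [map_pow, map_mul, map_inv, FreeGroup.lift_apply_of]
    show (fG m n hm 0 * (fG m n hm 1)⁻¹ * fG m n hm 0 * fG m n hm 1) ^ n = 1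
    simp only [fG, Matrix.cons_val_zero, Matrix.cons_val_one, Matrix.head_cons]
    set M : Fin m := ⟨m - 1, Nat.sub_lt hm one_pos⟩
    have key : sH m n hm M * (TH m n hm)⁻¹ * sH m n hm M * TH m n hm =
        sH m n hm M * sH m n hm (cycSucc hm M) := by
      rw [← H_conj m n hm M]; group
    rw [key, H_rel3]

/-- The map `Fin m ⊕ Unit → G` defining `ψ`. -/
noncomputable def fH : Fin m ⊕ Unit → PresentedGroup (relsGmn m n)
  | Sum.inl j => (τG m n ^ (j.val + 1))⁻¹ * σG m n * τG m n ^ (j.val + 1)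
  | Sum.inr _ => τG m n

lemma τG_pow_mod (k : ℕ) : τG m n ^ k = τG m n ^ (k % m) :=
  pow_eq_pow_mod k (τG_pow m n)

lemma fH_succ (j : Fin m) :
    fH m n (Sum.inl (cycSucc hm j)) =
      (τG m n ^ (j.val + 2))⁻¹ * σG m n * τG m n ^ (j.val + 2) := by
  show (τG m n ^ ((j.val + 1) % m + 1))⁻¹ * σG m n * τG m n ^ ((j.val + 1) % m + 1) = _
  have : τG m n ^ ((j.val + 1) % m + 1) = τG m n ^ (j.val + 2) := by
    rw [pow_succ, ← τG_pow_mod, ← pow_succ]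
  rw [this]

lemma fH_rels : ∀ r ∈ relsHmn m n hm, FreeGroup.lift (fH m n) r = 1 := by
  intro r hr
  rcases hr with ⟨j, h⟩ | h | ⟨j, h⟩ | ⟨j, h⟩
  · subst h
    simp only [map_pow, FreeGroup.lift_apply_of]
    show (fH m n (Sum.inl j)) ^ 2 = 1
    show ((τG m n ^ (j.val + 1))⁻¹ * σG m n * τG m n ^ (j.val + 1)) ^ 2 = 1
    have : ((τG m n ^ (j.val + 1))⁻¹ * σG m n * τG m n ^ (j.val + 1)) ^ 2 =
        (τG m n ^ (j.val + 1))⁻¹ * σG m n ^ 2 * τG m n ^ (j.val + 1) := by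
      rw [show (τG m n ^ (j.val + 1))⁻¹ * σG m n * τG m n ^ (j.val + 1) =
        (τG m n ^ (j.val + 1))⁻¹ * σG m n * ((τG m n ^ (j.val + 1))⁻¹)⁻¹ by group, conj_pow]
      group
    rw [this, σG_sq]; group
  · subst h
    simp only [map_pow, FreeGroup.lift_apply_of]
    show (fH m n (Sum.inr ())) ^ m = 1
    exact τG_pow m n
  · subst h
    simp only [map_pow, map_mul, FreeGroup.lift_apply_of]
    show (fH m n (Sum.inl j) * fH m n (Sum.inl (cycSucc hm j))) ^ n = 1
    rw [fH_succ m n hm j]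
    show ((τG m n ^ (j.val + 1))⁻¹ * σG m n * τG m n ^ (j.val + 1) *
      ((τG m n ^ (j.val + 2))⁻¹ * σG m n * τG m n ^ (j.val + 2))) ^ n = 1
    have key : (τG m n ^ (j.val + 1))⁻¹ * σG m n * τG m n ^ (j.val + 1) *
        ((τG m n ^ (j.val + 2))⁻¹ * σG m n * τG m n ^ (j.val + 2)) =
        (τG m n ^ (j.val + 1))⁻¹ * (σG m n * (τG m n)⁻¹ * σG m n * τG m n) *
          ((τG m n ^ (j.val + 1))⁻¹)⁻¹ := by
      rw [pow_succ]
      group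
    rw [key, conj_pow, G_rel3]
    group
  · subst h
    simp only [map_mul, map_inv, FreeGroup.lift_apply_of]
    show (fH m n (Sum.inr ()))⁻¹ * fH m n (Sum.inl j) * fH m n (Sum.inr ()) *
      fH m n (Sum.inl (cycSucc hm j)) = 1
    rw [fH_succ m n hm j]
    show (τG m n)⁻¹ * ((τG m n ^ (j.val + 1))⁻¹ * σG m n * τG m n ^ (j.val + 1)) * τG m n *
      ((τG m n ^ (j.val + 2))⁻¹ * σG m n * τG m n ^ (j.val + 2)) = 1
    have key : (τG m n)⁻¹ * ((τG m n ^ (j.val + 1))⁻¹ * σG m n * τG m n ^ (j.val + 1)) * τG m n *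
        ((τG m n ^ (j.val + 2))⁻¹ * σG m n * τG m n ^ (j.val + 2)) =
        (τG m n ^ (j.val + 2))⁻¹ * σG m n ^ 2 * τG m n ^ (j.val + 2) := by
      rw [pow_succ, pow_succ, sq]
      group
    rw [key, σG_sq]
    group

end Aux

/-- `s ↦ s_m`, `t ↦ T` extends to an isomorphism `G_{m,n} ≅ H_{m,n}`. -/
theorem stmt9 (m n : ℕ) (hm : 0 < m) (hn : 0 < n) :
    ∃ φ : PresentedGroup (relsGmn m n) ≃* PresentedGroup (relsHmn m n hm),
      φ (PresentedGroup.of 0) = PresentedGroup.of (Sum.inl ⟨m - 1, Nat.sub_lt hm one_pos⟩) ∧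
      φ (PresentedGroup.of 1) = PresentedGroup.of (Sum.inr ()) := by
  set φ' : PresentedGroup (relsGmn m n) →* PresentedGroup (relsHmn m n hm) :=
    PresentedGroup.toGroup (fG_rels m n hm)
  set ψ' : PresentedGroup (relsHmn m n hm) →* PresentedGroup (relsGmn m n) :=
    PresentedGroup.toGroup (fH_rels m n hm)
  have hψφ : ψ'.comp φ' = MonoidHom.id _ := by
    apply PresentedGroup.ext
    intro x
    fin_cases x
    · show ψ' (φ' (PresentedGroup.of 0)) = PresentedGroup.of 0
      rw [show φ' (PresentedGroup.of 0) = fG m n hm 0 from PresentedGroup.toGroup.of _]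
      show ψ' (sH m n hm ⟨m - 1, Nat.sub_lt hm one_pos⟩) = _
      rw [show ψ' (sH m n hm ⟨m - 1, _⟩) = fH m n (Sum.inl ⟨m - 1, Nat.sub_lt hm one_pos⟩)
        from PresentedGroup.toGroup.of _]
      show (τG m n ^ (m - 1 + 1))⁻¹ * σG m n * τG m n ^ (m - 1 + 1) = σG m n
      rw [Nat.sub_add_cancel hm, τG_pow]
      group
    · show ψ' (φ' (PresentedGroup.of 1)) = PresentedGroup.of 1
      rw [show φ' (PresentedGroup.of 1) = fG m n hm 1 from PresentedGroup.toGroup.of _]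
      show ψ' (TH m n hm) = _
      exact PresentedGroup.toGroup.of _
  have hφψ : φ'.comp ψ' = MonoidHom.id _ := by
    apply PresentedGroup.ext
    rintro (j | u)
    · show φ' (ψ' (PresentedGroup.of (Sum.inl j))) = PresentedGroup.of (Sum.inl j)
      rw [show ψ' (PresentedGroup.of (Sum.inl j)) = fH m n (Sum.inl j)
        from PresentedGroup.toGroup.of _]
      show φ' ((τG m n ^ (j.val + 1))⁻¹ * σG m n * τG m n ^ (j.val + 1)) = _
      have hφσ : φ' (σG m n) = sH m n hm ⟨m - 1, Nat.sub_lt hm one_pos⟩ :=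
        PresentedGroup.toGroup.of _
      have hφτ : φ' (τG m n) = TH m n hm := PresentedGroup.toGroup.of _
      rw [map_mul, map_mul, map_inv, map_pow, hφσ, hφτ]
      rw [H_conj_pow m n hm (j.val + 1) ⟨m - 1, Nat.sub_lt hm one_pos⟩]
      show sH m n hm _ = sH m n hm j
      congr 1
      have : (m - 1 + (j.val + 1)) % m = j.val := by
        rw [show m - 1 + (j.val + 1) = m + j.val by omega, Nat.add_mod_left,
          Nat.mod_eq_of_lt j.isLt]
      exact Fin.ext this
    · show φ' (ψ' (PresentedGroup.of (Sum.inr u))) = PresentedGroup.of (Sum.inr u)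
      rw [show ψ' (PresentedGroup.of (Sum.inr u)) = fH m n (Sum.inr u)
        from PresentedGroup.toGroup.of _]
      show φ' (τG m n) = _
      exact PresentedGroup.toGroup.of _
  refine ⟨MonoidHom.toMulEquiv φ' ψ' hψφ hφψ, ?_, ?_⟩
  · show φ' (PresentedGroup.of 0) = _
    exact PresentedGroup.toGroup.of _
  · show φ' (PresentedGroup.of 1) = _
    exact PresentedGroup.toGroup.of _
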